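/- Let L/K be a finite Galois extension of fields with K infinite and Galois group isomorphic to the symmetric group S_d acting on the d conjugates α_1,...,α_d of a generator α of degree d (with L the splitting field of the minimal polynomial of α). Then there exist conjugate elements β_1,...,β_d generating L over K with β_1 + β_2 + ... + β_d ≠ 0. -/

import Mathlib

open Polynomial

theorem exists_generating_conjugates_with_nonzero_sum (K L : Type*) [Field K] [Field L]
    [Algebra K L] [FiniteDimensional K L] [IsGalois K L] [Infinite K]
    (d : ℕ) (hd : 0 < d) (α : L) (αs : Fin d → L)
    (hroots : (minpoly K α).map (algebraMap K L) = ∏ i, (X - C (αs i)))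
    (hgen : IntermediateField.adjoin K (Set.range αs) = ⊤)
    (hGal : Nonempty ((L ≃ₐ[K] L) ≃* Equiv.Perm (Fin d))) :
    ∃ β : Fin d → L,
      (minpoly K (β ⟨0, hd⟩)).map (algebraMap K L) = ∏ i, (X - C (β i)) ∧
      IntermediateField.adjoin K (Set.range β) = ⊤ ∧
      ∑ i, β i ≠ 0 := by
  classical
  set i0 : Fin d := ⟨0, hd⟩
  have hint : ∀ x : L, IsIntegral K x := fun x => IsIntegral.of_finite K x
  have halg : ∀ x : L, IsAlgebraic K x := fun x => (hint x).isAlgebraic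
  -- each αs i is a root of the minimal polynomial of α
  have hαroot : ∀ i, aeval (αs i) (minpoly K α) = 0 := by
    intro i
    have h1 : eval (αs i) ((minpoly K α).map (algebraMap K L)) = 0 := by
      rw [hroots, eval_prod]
      exact Finset.prod_eq_zero (Finset.mem_univ i) (by simp)
    rwa [eval_map, ← aeval_def] at h1
  -- separability and distinctness of the αs
  have hsep : (minpoly K α).Separable := Algebra.IsSeparable.isSeparable K α
  have hprodsep : (∏ i, (X - C (αs i))).Separable := by
    rw [← hroots]; exact hsep.map
  have hrootsprod : (∏ i : Fin d, (X - C (αs i))).roots = Finset.univ.val.map αs := by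
    have he : (∏ i : Fin d, (X - C (αs i))) =
        (Multiset.map (fun a : L => X - C a) (Finset.univ.val.map αs)).prod := by
      rw [Multiset.map_map, Finset.prod_eq_multiset_prod]
      rfl
    rw [he]
    exact roots_multiset_prod_X_sub_C _
  have hndαs : (Finset.univ.val.map αs).Nodup := by
    rw [← hrootsprod]; exact nodup_roots hprodsep
  have hαsinj : Function.Injective αs := fun i j hij =>
    Multiset.inj_on_of_nodup_map hndαs i (Finset.mem_univ i) j (Finset.mem_univ j) hij
  -- membership of roots of the product
  have hmemprod : ∀ y : L, aeval y (minpoly K α) = 0 → ∃ j, αs j = y := by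
    intro y hy
    have hne : (∏ i : Fin d, (X - C (αs i))) ≠ 0 := by
      rw [← hroots]
      exact ((minpoly.monic (hint α)).map (algebraMap K L)).ne_zero
    have hmem : y ∈ (∏ i : Fin d, (X - C (αs i))).roots := by
      rw [mem_roots hne, IsRoot.def, ← hroots, eval_map, ← aeval_def]
      exact hy
    rw [hrootsprod] at hmem
    obtain ⟨j, _, hj⟩ := Multiset.mem_map.1 hmem
    exact ⟨j, hj⟩
  -- there is a power sum which is nonzero (Vandermonde)
  have hk : ∃ k : ℕ, ∑ i, αs i ^ k ≠ 0 := by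
    by_contra hall
    push_neg at hall
    have hdet : (Matrix.vandermonde αs).det ≠ 0 := by
      rw [Matrix.det_vandermonde]
      refine Finset.prod_ne_zero_iff.2 fun i _ => Finset.prod_ne_zero_iff.2 fun j hj => ?_
      rw [sub_ne_zero]
      exact fun h => (Finset.mem_Ioi.1 hj).ne' (hαsinj h)
    have hdetT : ((Matrix.vandermonde αs).transpose).det ≠ 0 := by rwa [Matrix.det_transpose]
    have hmv : (Matrix.vandermonde αs).transpose.mulVec (fun _ => (1 : L)) = 0 := by
      funext i
      simpa [Matrix.mulVec, dotProduct, Matrix.vandermonde] using hall (i : ℕ)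
    have := Matrix.eq_zero_of_mulVec_eq_zero hdetT hmv
    exact one_ne_zero (congrFun this i0)
  obtain ⟨k, hPk⟩ := hk
  set S1 : L := ∑ i, αs i with hS1
  set Pk : L := ∑ i, αs i ^ k with hPkdef
  -- choose a good constant c
  set T : Set L := insert (-S1 / Pk)
    (Set.range fun p : Fin d × Fin d =>
      (αs p.1 - αs p.2) / (αs p.2 ^ k - αs p.1 ^ k)) with hT
  have hTfin : T.Finite := ((Set.finite_range _).insert _)
  have hBadfin : {c : K | algebraMap K L c ∈ T}.Finite :=
    hTfin.preimage ((algebraMap K L).injective.injOn)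
  obtain ⟨c, hc⟩ := hBadfin.infinite_compl.nonempty
  have hc' : algebraMap K L c ∉ T := hc
  set c' : L := algebraMap K L c with hc'def
  set β : Fin d → L := fun i => αs i + c' * αs i ^ k with hβ
  -- β is injective
  have hβinj : Function.Injective β := by
    intro i j hij
    by_contra hne
    by_cases hD : αs j ^ k - αs i ^ k = 0
    · have : αs i = αs j := by
        have := hij
        simp only [hβ] at this
        rw [sub_eq_zero] at hD
        rw [hD] at this
        linear_combination this
      exact hne (hαsinj this)
    · apply hc'
      rw [hT]
      refine Set.mem_insert_iff.2 (Or.inr ⟨(i, j), ?_⟩)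
      have : αs i - αs j = c' * (αs j ^ k - αs i ^ k) := by
        simp only [hβ] at hij
        linear_combination hij
      field_simp
      linear_combination this
  -- the sum is nonzero
  have hsum : ∑ i, β i ≠ 0 := by
    intro h0
    apply hc'
    have hs : S1 + c' * Pk = 0 := by
      rw [hS1, hPkdef, Finset.mul_sum, ← Finset.sum_add_distrib]
      exact h0
    rw [hT]
    refine Set.mem_insert_iff.2 (Or.inl ?_)
    field_simp
    linear_combination hs
  -- homomorphisms commute with the polynomial map x ↦ x + c' * x ^ k
  have hcomm : ∀ (ψ : L ≃ₐ[K] L) (x : L), ψ (x + c' * x ^ k) = ψ x + c' * ψ x ^ k := by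
    intro ψ x
    simp [hc'def, map_add, map_mul, map_pow, AlgEquiv.commutes]
  -- minpoly of αs i0 equals minpoly of α
  have hminpoly_eq : minpoly K (αs i0) = minpoly K α :=
    (minpoly.eq_of_irreducible_of_monic (minpoly.irreducible (hint α)) (hαroot i0)
      (minpoly.monic (hint α))).symm
  -- set up P = minpoly of β i0 mapped to L
  set P : L[X] := (minpoly K (β i0)).map (algebraMap K L) with hP
  have hβ0int : IsIntegral K (β i0) := hint _
  have hPmonic : P.Monic := (minpoly.monic hβ0int).map _
  have hPne : P ≠ 0 := hPmonic.ne_zero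
  have hPsplits : P.Splits :=
    Normal.splits inferInstance (β i0)
  have hPsep : P.Separable := Polynomial.Separable.map (Algebra.IsSeparable.isSeparable K (β i0))
  have hPmem : ∀ y : L, y ∈ P.roots ↔ aeval y (minpoly K (β i0)) = 0 := by
    intro y
    rw [mem_roots hPne, IsRoot.def, hP, eval_map, ← aeval_def]
  -- every root of P is some β j
  have h1 : ∀ y ∈ P.roots, ∃ j, β j = y := by
    intro y hy
    obtain ⟨σ, hσ⟩ := minpoly.exists_algEquiv_of_root' (halg (β i0)) ((hPmem y).1 hy)
    have hσα : aeval (σ (αs i0)) (minpoly K α) = 0 := by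
      rw [aeval_algHom_apply σ (αs i0), hαroot i0, map_zero]
    obtain ⟨j, hj⟩ := hmemprod _ hσα
    refine ⟨j, ?_⟩
    have hσβ : σ (β i0) = β j := by
      show σ (αs i0 + c' * αs i0 ^ k) = αs j + c' * αs j ^ k
      rw [hcomm σ (αs i0), hj]
    rw [← hσ, hσβ]
  -- every β j is a root of P
  have h2 : ∀ j, β j ∈ P.roots := by
    intro j
    obtain ⟨σ, hσ⟩ := minpoly.exists_algEquiv_of_root' (halg (αs i0))
      (show aeval (αs j) (minpoly K (αs i0)) = 0 by rw [hminpoly_eq]; exact hαroot j)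
    have hσβ : σ (β i0) = β j := by
      show σ (αs i0 + c' * αs i0 ^ k) = αs j + c' * αs j ^ k
      rw [hcomm σ (αs i0), hσ]
    rw [hPmem, ← hσβ, aeval_algHom_apply σ (β i0), minpoly.aeval, map_zero]
  -- hence the roots of P are exactly the β j
  have hβM : P.roots = Finset.univ.val.map β := by
    have hnd1 : P.roots.Nodup := nodup_roots hPsep
    have hnd2 : (Finset.univ.val.map β).Nodup := Multiset.Nodup.map hβinj Finset.univ.nodup
    apply le_antisymm
    · rw [Multiset.le_iff_subset hnd1]
      intro y hy
      obtain ⟨j, hj⟩ := h1 y hy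
      exact Multiset.mem_map.2 ⟨j, Finset.mem_univ j, hj⟩
    · rw [Multiset.le_iff_subset hnd2]
      intro y hy
      obtain ⟨j, _, hj⟩ := Multiset.mem_map.1 hy
      rw [← hj]
      exact h2 j
  have hPprod : P = ∏ i, (X - C (β i)) := by
    rw [hPsplits.eq_prod_roots_of_monic hPmonic, hβM,
      Finset.prod_eq_multiset_prod, Multiset.map_map]
    rfl
  -- the β generate L over K
  have hFtop : IntermediateField.adjoin K (Set.range β) = ⊤ := by
    set F := IntermediateField.adjoin K (Set.range β) with hF
    have hfix : IntermediateField.fixingSubgroup F = ⊥ := by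
      rw [eq_bot_iff]
      intro σ hσ
      rw [Subgroup.mem_bot]
      have hσβ : ∀ i, σ (β i) = β i := by
        intro i
        exact (IntermediateField.mem_fixingSubgroup_iff F σ).1 hσ (β i)
          (IntermediateField.subset_adjoin K _ ⟨i, rfl⟩)
      have hσα : ∀ i, σ (αs i) = αs i := by
        intro i
        have hev : aeval (σ (αs i)) (minpoly K α) = 0 := by
          rw [aeval_algHom_apply σ (αs i), hαroot i, map_zero]
        obtain ⟨j, hj⟩ := hmemprod _ hev
        have : β j = β i := by
          rw [← hσβ i]
          show αs j + c' * αs j ^ k = σ (αs i + c' * αs i ^ k)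
          rw [hcomm σ (αs i), hj]
        rw [← hj]
        exact congrArg αs (hβinj this)
      -- σ fixes a generating set, hence is the identity
      have htopalg : Algebra.adjoin K (Set.range αs) = ⊤ := by
        have h := IntermediateField.adjoin_toSubalgebra_of_isAlgebraic
          (S := Set.range αs) (fun x _ => halg x)
        rw [hgen, IntermediateField.top_toSubalgebra] at h
        exact h.symm
      have hle : Algebra.adjoin K (Set.range αs) ≤
          AlgHom.equalizer (σ : L →ₐ[K] L) (AlgHom.id K L) := by
        apply Algebra.adjoin_le
        rintro x ⟨i, rfl⟩
        exact hσα i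
      rw [htopalg] at hle
      ext x
      exact hle Algebra.mem_top
    have hFeq : IntermediateField.fixedField (IntermediateField.fixingSubgroup F) = F :=
      IsGalois.fixedField_fixingSubgroup F
    rw [hfix] at hFeq
    have htople : (⊤ : IntermediateField K L) ≤
        IntermediateField.fixedField (⊥ : Subgroup (L ≃ₐ[K] L)) :=
      (IntermediateField.le_iff_le _ _).mpr bot_le
    rw [hFeq] at htople
    exact top_le_iff.1 htople
  exact ⟨β, hPprod, hFtop, hsum⟩
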